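/- arXiv:2508.11650 — 13 statements merged into one kernel-verified Lean document; each statement's English description precedes it below -/
import Mathlib

section
/- For every natural number n ≥ 0, the generalized Gaussian third-order Jacobsthal number satisfies the Binet formula Jg(n) = (1/7)·[ (a+b+c)·(1 + i/2)·2^n + (4a+4b-3c + (2a-5b+2c)·i)·Ω(n) + (6a-b-c - (4a+4b-3c)·i)·Ω(n+1) ]. -/
/-- Ω(n) = 0, 1, -1 according as n ≡ 0, 1, 2 (mod 3). -/
def Omg (n : ℕ) : ℤ := if n % 3 = 0 then 0 else if n % 3 = 1 then 1 else -1

lemma Omg_add_three (k : ℕ) : Omg (k + 3) = Omg k := by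
  simp [Omg, Nat.add_mod]

lemma Omg_add_two (k : ℕ) : Omg (k + 2) = -Omg k - Omg (k + 1) := by
  have h : k % 3 = 0 ∨ k % 3 = 1 ∨ k % 3 = 2 := by omega
  rcases h with h | h | h <;> simp [Omg, Nat.add_mod, h]

theorem binet_generalized_gaussian_third_order_jacobsthal
    (a b c : ℝ) (Jg : ℕ → ℂ)
    (h0 : Jg 0 = (a : ℂ) + ((c - b - a) / 2 : ℝ) * Complex.I)
    (h1 : Jg 1 = (b : ℂ) + (a : ℝ) * Complex.I)
    (h2 : Jg 2 = (c : ℂ) + (b : ℝ) * Complex.I)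
    (hrec : ∀ n : ℕ, Jg (n + 3) = Jg (n + 2) + Jg (n + 1) + 2 * Jg n) :
    ∀ n : ℕ,
      Jg n = (1 / 7 : ℂ) *
        (((a : ℂ) + b + c) * (1 + Complex.I / 2) * 2 ^ n
          + ((4 * a + 4 * b - 3 * c : ℝ) + (2 * a - 5 * b + 2 * c : ℝ) * Complex.I) * (Omg n : ℂ)
          + ((6 * a - b - c : ℝ) - (4 * a + 4 * b - 3 * c : ℝ) * Complex.I) * (Omg (n + 1) : ℂ)) := by
  intro n
  induction n using Nat.strong_induction_on with
  | _ n ih =>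
    match n with
    | 0 =>
      rw [h0]
      norm_num [Omg]
      ring
    | 1 =>
      rw [h1]
      norm_num [Omg]
      ring
    | 2 =>
      rw [h2]
      norm_num [Omg]
      ring
    | (k + 3) =>
      rw [hrec k, ih (k + 2) (by omega), ih (k + 1) (by omega), ih k (by omega)]
      have e4 : k + 3 + 1 = (k + 1) + 3 := by ring
      rw [e4, Omg_add_three, Omg_add_three, Omg_add_two]
      push_cast
      ring
end

section
/- For every natural number n ≥ 0, the Gaussian modified third-order Jacobsthal number satisfies the Binet formula Kg(n) = (1 + i/2)·2^n + (1 + i)·Ω(n) + (2 - i)·Ω(n+1). -/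
theorem binet_gaussian_modified_third_order_jacobsthal
    (Kg : ℕ → ℂ)
    (h0 : Kg 0 = 3 - (1 / 2 : ℂ) * Complex.I)
    (h1 : Kg 1 = 1 + 3 * Complex.I)
    (h2 : Kg 2 = 3 + Complex.I)
    (hrec : ∀ n : ℕ, Kg (n + 3) = Kg (n + 2) + Kg (n + 1) + 2 * Kg n) :
    ∀ n : ℕ,
      Kg n = (1 + Complex.I / 2) * 2 ^ n
        + (1 + Complex.I) * (Omg n : ℂ)
        + (2 - Complex.I) * (Omg (n + 1) : ℂ) := by
  intro n
  induction n using Nat.strong_induction_on with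
  | _ n ih =>
    match n with
    | 0 => simp [Omg, h0]; ring
    | 1 => simp [Omg, h1]; ring
    | 2 => simp [Omg, h2]; ring
    | (m + 3) =>
      rw [hrec m, ih (m + 2) (by omega), ih (m + 1) (by omega), ih m (by omega)]
      have e1 : Omg (m + 3) = Omg m := by simp [Omg, Nat.add_mod]
      have e2 : Omg (m + 4) = Omg (m + 1) := by
        have : (m + 4) % 3 = (m + 1) % 3 := by omega
        unfold Omg; rw [this]
      rw [e1, e2]
      have h3 : m % 3 = 0 ∨ m % 3 = 1 ∨ m % 3 = 2 := by omega
      rcases h3 with h | h | h <;>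
        · have ha : (m + 1) % 3 = (m % 3 + 1) % 3 := by omega
          have hb : (m + 2) % 3 = (m % 3 + 2) % 3 := by omega
          simp [Omg, h, ha, hb]
          push_cast
          ring
end

section
/- For every natural number n ≥ 0, Jg(n+3) = Jg(n) + (a+b+c)·(1 + i/2)·2^n. -/
theorem generalized_gaussian_third_order_jacobsthal_shift_three
    (a b c : ℝ) (Jg : ℕ → ℂ)
    (h0 : Jg 0 = (a : ℂ) + ((c - b - a) / 2 : ℝ) * Complex.I)
    (h1 : Jg 1 = (b : ℂ) + (a : ℝ) * Complex.I)
    (h2 : Jg 2 = (c : ℂ) + (b : ℝ) * Complex.I)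
    (hrec : ∀ n : ℕ, Jg (n + 3) = Jg (n + 2) + Jg (n + 1) + 2 * Jg n) :
    ∀ n : ℕ, Jg (n + 3) = Jg n + ((a : ℂ) + b + c) * (1 + Complex.I / 2) * 2 ^ n := by
  intro n
  induction n using Nat.strong_induction_on with
  | _ n ih =>
    match n, ih with
    | 0, _ =>
      rw [hrec 0, h0, h1, h2]; push_cast; ring
    | 1, _ =>
      rw [hrec 1, hrec 0, h0, h1, h2]; push_cast; ring
    | 2, _ =>
      rw [hrec 2, hrec 1, hrec 0, h0, h1, h2]; push_cast; ring
    | (m + 3), ih =>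
      rw [show m + 3 + 3 = (m + 2) + 3 + 1 from rfl]
      rw [hrec (m + 3), ih (m + 2) (by omega), ih (m + 1) (by omega), ih m (by omega)]
      linear_combination ih m (by omega) - hrec m
end

section
/- For every natural number n ≥ 0, Jg(n) + Jg(n+1) + Jg(n+2) = (a+b+c)·(1 + i/2)·2^n. -/
theorem generalized_gaussian_third_order_jacobsthal_three_term_sum
    (a b c : ℝ) (Jg : ℕ → ℂ)
    (h0 : Jg 0 = (a : ℂ) + ((c - b - a) / 2 : ℝ) * Complex.I)
    (h1 : Jg 1 = (b : ℂ) + (a : ℝ) * Complex.I)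
    (h2 : Jg 2 = (c : ℂ) + (b : ℝ) * Complex.I)
    (hrec : ∀ n : ℕ, Jg (n + 3) = Jg (n + 2) + Jg (n + 1) + 2 * Jg n) :
    ∀ n : ℕ, Jg n + Jg (n + 1) + Jg (n + 2) = ((a : ℂ) + b + c) * (1 + Complex.I / 2) * 2 ^ n := by
  intro n
  induction n with
  | zero => rw [h0, h1, h2]; push_cast; ring
  | succ k ih =>
      have := hrec k
      rw [show k + 1 + 1 + 1 = k + 3 from rfl, this, pow_succ]
      linear_combination 2 * ih
end

section
/- For every natural number n ≥ 1, the generalized Gaussian third-order Jacobsthal number with negative subscript satisfies Jg(-n) = (1/7)·[ (a+b+c)·(1 + i/2)·(1/2)^n - (4a+4b-3c + (2a-5b+2c)·i)·Ω(n) - (6a-b-c - (4a+4b-3c)·i)·Ω(n-1) ]. -/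
/-- Ω(n) = 0, 1, -1 according as n ≡ 0, 1, 2 (mod 3), for integer n. -/
def OmgZ (n : ℤ) : ℤ := if n % 3 = 0 then 0 else if n % 3 = 1 then 1 else -1

private noncomputable def Rrhs (a b c : ℝ) (n : ℕ) : ℂ :=
  (1 / 7 : ℂ) *
    (((a : ℂ) + b + c) * (1 + Complex.I / 2) * (1 / 2 : ℂ) ^ n
      - ((4 * a + 4 * b - 3 * c : ℝ) + (2 * a - 5 * b + 2 * c : ℝ) * Complex.I)
        * (OmgZ (n : ℤ) : ℂ)
      - ((6 * a - b - c : ℝ) - (4 * a + 4 * b - 3 * c : ℝ) * Complex.I)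
        * (OmgZ ((n : ℤ) - 1) : ℂ))

private lemma omgz_eq (m : ℤ) (r : ℤ) (h : m % 3 = r) :
    OmgZ m = if r = 0 then 0 else if r = 1 then 1 else -1 := by
  simp [OmgZ, h]

private lemma Rkey (a b c : ℝ) (n : ℕ) :
    Rrhs a b c (n + 3) = (Rrhs a b c n - Rrhs a b c (n + 1) - Rrhs a b c (n + 2)) / 2 := by
  have h3 : (n : ℤ) % 3 = 0 ∨ (n : ℤ) % 3 = 1 ∨ (n : ℤ) % 3 = 2 := by omega
  unfold Rrhs
  simp only [Nat.cast_add, Nat.cast_ofNat, Nat.cast_one]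
  rw [show (n:ℤ)+3-1 = (n:ℤ)+2 from by ring, show (n:ℤ)+1-1 = (n:ℤ) from by ring,
      show (n:ℤ)+2-1 = (n:ℤ)+1 from by ring]
  rcases h3 with h | h | h
  · rw [omgz_eq _ 0 h, omgz_eq ((n:ℤ)-1) 2 (by omega), omgz_eq ((n:ℤ)+1) 1 (by omega),
        omgz_eq ((n:ℤ)+2) 2 (by omega), omgz_eq ((n:ℤ)+3) 0 (by omega)]
    norm_num; push_cast; ring
  · rw [omgz_eq _ 1 h, omgz_eq ((n:ℤ)-1) 0 (by omega), omgz_eq ((n:ℤ)+1) 2 (by omega),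
        omgz_eq ((n:ℤ)+2) 0 (by omega), omgz_eq ((n:ℤ)+3) 1 (by omega)]
    norm_num; push_cast; ring
  · rw [omgz_eq _ 2 h, omgz_eq ((n:ℤ)-1) 1 (by omega), omgz_eq ((n:ℤ)+1) 0 (by omega),
        omgz_eq ((n:ℤ)+2) 1 (by omega), omgz_eq ((n:ℤ)+3) 2 (by omega)]
    norm_num; push_cast; ring

theorem binet_negative_generalized_gaussian_third_order_jacobsthal
    (a b c : ℝ) (Jg : ℤ → ℂ)
    (h0 : Jg 0 = (a : ℂ) + ((c - b - a) / 2 : ℝ) * Complex.I)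
    (h1 : Jg 1 = (b : ℂ) + (a : ℝ) * Complex.I)
    (h2 : Jg 2 = (c : ℂ) + (b : ℝ) * Complex.I)
    (hrec : ∀ n : ℤ, Jg (n + 3) = Jg (n + 2) + Jg (n + 1) + 2 * Jg n) :
    ∀ n : ℕ, 1 ≤ n →
      Jg (-(n : ℤ)) = (1 / 7 : ℂ) *
        (((a : ℂ) + b + c) * (1 + Complex.I / 2) * (1 / 2 : ℂ) ^ n
          - ((4 * a + 4 * b - 3 * c : ℝ) + (2 * a - 5 * b + 2 * c : ℝ) * Complex.I)
            * (OmgZ (n : ℤ) : ℂ)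
          - ((6 * a - b - c : ℝ) - (4 * a + 4 * b - 3 * c : ℝ) * Complex.I)
            * (OmgZ ((n : ℤ) - 1) : ℂ)) := by
  have hm1 : Jg (-1) = (Jg 2 - Jg 1 - Jg 0) / 2 := by
    have := hrec (-1); push_cast at this ⊢; norm_num at this ⊢; linear_combination -this / 2
  have hm2 : Jg (-2) = (Jg 1 - Jg 0 - Jg (-1)) / 2 := by
    have := hrec (-2); norm_num at this ⊢; linear_combination -this / 2
  have main : ∀ n : ℕ, Jg (-(n:ℤ)) = Rrhs a b c n ∧ Jg (-((n:ℤ)+1)) = Rrhs a b c (n+1)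
      ∧ Jg (-((n:ℤ)+2)) = Rrhs a b c (n+2) := by
    intro n
    induction n with
    | zero =>
      refine ⟨?_, ?_, ?_⟩ <;>
        simp only [Rrhs, Nat.cast_ofNat, Nat.cast_one, Nat.cast_zero] <;>
        norm_num [OmgZ, h0, hm1, hm2, h1, h2] <;> ring
    | succ k ih =>
      obtain ⟨i0, i1, i2⟩ := ih
      refine ⟨by push_cast; convert i1 using 2 <;> push_cast <;> ring, 
             by push_cast; convert i2 using 2 <;> push_cast <;> ring, ?_⟩
      have hr := hrec (-((k:ℤ)+3))
      have e : Jg (-((k:ℤ)+3)) = (Jg (-(k:ℤ)) - Jg (-((k:ℤ)+1)) - Jg (-((k:ℤ)+2))) / 2 := by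
        have h1' : -((k:ℤ)+3) + 3 = -(k:ℤ) := by ring
        have h2' : -((k:ℤ)+3) + 2 = -((k:ℤ)+1) := by ring
        have h3' : -((k:ℤ)+3) + 1 = -((k:ℤ)+2) := by ring
        rw [h1', h2', h3'] at hr
        linear_combination -hr / 2
      have : Jg (-((k:ℤ)+3)) = Rrhs a b c (k + 3) := by
        rw [e, i0, i1, i2, Rkey]
      convert this using 2 <;> push_cast <;> ring
  intro n _
  rw [(main n).1, Rrhs]
end

section
/- (d'Ocagne's identity) For all natural numbers n and m with n ≥ m, Jg(m+1)·Jg(n) - Jg(m)·Jg(n+1) = (1/49)·[ (λ₁² - λ₁·λ₂ + λ₂²)·Ω(n-m) + λ·(1 + i/2)·(2^m·Ψ(n) - 2^n·Ψ(m)) ], where λ = a+b+c, λ₁ = 4a+4b-3c + (2a-5b+2c)·i, λ₂ = 6a-b-c - (4a+4b-3c)·i, and Ψ(n) = (2λ₁+λ₂)·Ω(n) + (3λ₂-λ₁)·Ω(n+1). -/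
lemma omg_shift (n : ℕ) : Omg (n + 3) = Omg n := by
  simp [Omg, Nat.add_mod]

lemma omg_sum (n : ℕ) : Omg n + Omg (n + 1) + Omg (n + 2) = 0 := by
  have h : n % 3 = 0 ∨ n % 3 = 1 ∨ n % 3 = 2 := by omega
  rcases h with h | h | h <;> simp [Omg, Nat.add_mod, h]

set_option maxHeartbeats 2000000 in
theorem docagne_generalized_gaussian_third_order_jacobsthal
    (a b c : ℝ) (Jg : ℕ → ℂ)
    (h0 : Jg 0 = (a : ℂ) + ((c - b - a) / 2 : ℝ) * Complex.I)
    (h1 : Jg 1 = (b : ℂ) + (a : ℝ) * Complex.I)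
    (h2 : Jg 2 = (c : ℂ) + (b : ℝ) * Complex.I)
    (hrec : ∀ n : ℕ, Jg (n + 3) = Jg (n + 2) + Jg (n + 1) + 2 * Jg n)
    (lam lam1 lam2 : ℂ) (Psi : ℕ → ℂ)
    (hlam : lam = (a : ℂ) + b + c)
    (hlam1 : lam1 = (4 * a + 4 * b - 3 * c : ℝ) + (2 * a - 5 * b + 2 * c : ℝ) * Complex.I)
    (hlam2 : lam2 = (6 * a - b - c : ℝ) - (4 * a + 4 * b - 3 * c : ℝ) * Complex.I)
    (hPsi : ∀ n : ℕ, Psi n = (2 * lam1 + lam2) * (Omg n : ℂ) + (3 * lam2 - lam1) * (Omg (n + 1) : ℂ)) :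
    ∀ n m : ℕ, m ≤ n →
      Jg (m + 1) * Jg n - Jg m * Jg (n + 1) =
        (1 / 49 : ℂ) *
          ((lam1 ^ 2 - lam1 * lam2 + lam2 ^ 2) * (Omg (n - m) : ℂ)
            + lam * (1 + Complex.I / 2) * (2 ^ m * Psi n - 2 ^ n * Psi m)) := by
  have closed : ∀ n : ℕ, Jg n =
      lam * (1 + Complex.I / 2) / 7 * 2 ^ n + lam1 / 7 * (Omg n : ℂ)
        + lam2 / 7 * (Omg (n + 1) : ℂ) := by
    intro n
    induction n using Nat.strong_induction_on with
    | _ n ih =>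
      match n with
      | 0 =>
        rw [h0, hlam, hlam1, hlam2]
        norm_num [Omg]
        push_cast
        ring
      | 1 =>
        rw [h1, hlam, hlam1, hlam2]
        norm_num [Omg]
        push_cast
        ring
      | 2 =>
        rw [h2, hlam, hlam1, hlam2]
        norm_num [Omg]
        push_cast
        ring
      | (k + 3) =>
        rw [hrec k, ih (k + 2) (by omega), ih (k + 1) (by omega), ih k (by omega)]
        rw [show k + 3 + 1 = (k + 1) + 3 by ring, omg_shift, omg_shift]
        have hs := omg_sum k
        have hs1 := omg_sum (k + 1)
        have e : (Omg (k + 2) : ℂ) = -(Omg k : ℂ) - (Omg (k + 1) : ℂ) := by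
          push_cast [show Omg (k+2) = -(Omg k) - Omg (k+1) by omega]; ring
        have e2 : Omg (k + 1 + 1) = Omg (k + 2) := rfl
        rw [e2, e]
        ring
  intro n m hmn
  rw [closed (m + 1), closed n, closed m, closed (n + 1), hPsi n, hPsi m]
  have hm3 : m % 3 = 0 ∨ m % 3 = 1 ∨ m % 3 = 2 := by omega
  have hn3 : n % 3 = 0 ∨ n % 3 = 1 ∨ n % 3 = 2 := by omega
  rcases hm3 with hm | hm | hm <;> rcases hn3 with hn | hn | hn <;>
  · have k1 : (n + 1) % 3 = (n % 3 + 1) % 3 := by omega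
    have k2 : (n + 1 + 1) % 3 = (n % 3 + 2) % 3 := by omega
    have k3 : (m + 1) % 3 = (m % 3 + 1) % 3 := by omega
    have k4 : (m + 1 + 1) % 3 = (m % 3 + 2) % 3 := by omega
    have k5 : (n + 2) % 3 = (n % 3 + 2) % 3 := by omega
    have k6 : (m + 2) % 3 = (m % 3 + 2) % 3 := by omega
    have hd : (n - m) % 3 = (n % 3 + 3 - m % 3) % 3 := by omega
    simp only [Omg, k1, k2, k3, k4, k5, k6, hd, hm, hn]
    norm_num
    push_cast
    ring
end

section
/- (Cassini's identity) For every natural number n ≥ 1, Jg(n)² - Jg(n-1)·Jg(n+1) = (1/49)·[ λ₁² - λ₁·λ₂ + λ₂² + λ·(1 + i/2)·2^(n-1)·(Ψ(n) - 2·Ψ(n-1)) ], where λ = a+b+c, λ₁ = 4a+4b-3c + (2a-5b+2c)·i, λ₂ = 6a-b-c - (4a+4b-3c)·i, and Ψ(n) = (2λ₁+λ₂)·Ω(n) + (3λ₂-λ₁)·Ω(n+1). -/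
theorem cassini_generalized_gaussian_third_order_jacobsthal
    (a b c : ℝ) (Jg : ℕ → ℂ)
    (h0 : Jg 0 = (a : ℂ) + ((c - b - a) / 2 : ℝ) * Complex.I)
    (h1 : Jg 1 = (b : ℂ) + (a : ℝ) * Complex.I)
    (h2 : Jg 2 = (c : ℂ) + (b : ℝ) * Complex.I)
    (hrec : ∀ n : ℕ, Jg (n + 3) = Jg (n + 2) + Jg (n + 1) + 2 * Jg n)
    (lam lam1 lam2 : ℂ) (Psi : ℕ → ℂ)
    (hlam : lam = (a : ℂ) + b + c)
    (hlam1 : lam1 = (4 * a + 4 * b - 3 * c : ℝ) + (2 * a - 5 * b + 2 * c : ℝ) * Complex.I)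
    (hlam2 : lam2 = (6 * a - b - c : ℝ) - (4 * a + 4 * b - 3 * c : ℝ) * Complex.I)
    (hPsi : ∀ n : ℕ, Psi n = (2 * lam1 + lam2) * (Omg n : ℂ) + (3 * lam2 - lam1) * (Omg (n + 1) : ℂ)) :
    ∀ n : ℕ, 1 ≤ n →
      Jg n ^ 2 - Jg (n - 1) * Jg (n + 1) =
        (1 / 49 : ℂ) *
          (lam1 ^ 2 - lam1 * lam2 + lam2 ^ 2
            + lam * (1 + Complex.I / 2) * 2 ^ (n - 1) * (Psi n - 2 * Psi (n - 1))) := by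
  set A : ℂ := (Jg 0 + Jg 1 + Jg 2) / 7 with hA
  set q : ℕ → ℂ := fun r =>
    if r = 0 then Jg 0 - A else if r = 1 then Jg 1 - 2 * A else Jg 2 - 4 * A with hq
  have closed : ∀ n : ℕ, Jg n = A * 2 ^ n + q (n % 3) := by
    intro n
    induction n using Nat.strong_induction_on with
    | _ n ih =>
      match n with
      | 0 => simp [hq, hA]; try ring
      | 1 => simp [hq, hA]; try ring
      | 2 => simp [hq, hA]; try ring
      | (m + 3) =>
        rw [hrec m, ih (m + 2) (by omega), ih (m + 1) (by omega), ih m (by omega)]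
        have h3 : (m + 3) % 3 = m % 3 := by omega
        rcases (by omega : m % 3 = 0 ∨ m % 3 = 1 ∨ m % 3 = 2) with hr | hr | hr
        · have e1 : (m + 1) % 3 = 1 := by omega
          have e2 : (m + 2) % 3 = 2 := by omega
          simp only [hq, h3, hr, e1, e2, hA]
          norm_num; ring
        · have e1 : (m + 1) % 3 = 2 := by omega
          have e2 : (m + 2) % 3 = 0 := by omega
          simp only [hq, h3, hr, e1, e2, hA]
          norm_num; ring
        · have e1 : (m + 1) % 3 = 0 := by omega
          have e2 : (m + 2) % 3 = 1 := by omega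
          simp only [hq, h3, hr, e1, e2, hA]
          norm_num; ring
  intro n hn
  obtain ⟨m, rfl⟩ : ∃ m, n = m + 1 := ⟨n - 1, by omega⟩
  simp only [Nat.add_sub_cancel]
  rw [hPsi, hPsi, closed m, closed (m + 1), closed (m + 2)]
  rcases (by omega : m % 3 = 0 ∨ m % 3 = 1 ∨ m % 3 = 2) with hr | hr | hr <;>
    [ (have e1 : (m + 1) % 3 = 1 := by omega
       have e2 : (m + 1 + 1) % 3 = 2 := by omega);
      (have e1 : (m + 1) % 3 = 2 := by omega
       have e2 : (m + 1 + 1) % 3 = 0 := by omega);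
      (have e1 : (m + 1) % 3 = 0 := by omega
       have e2 : (m + 1 + 1) % 3 = 1 := by omega)] <;>
  · have e2' : (m + 2) % 3 = (m + 1 + 1) % 3 := by omega
    simp only [hq, Omg, hr, e1, e2, e2', hA, h0, h1, h2, hlam, hlam1, hlam2]
    norm_num
    ring
end

section
/- For every natural number n ≥ 1, the Gaussian third-order Jacobsthal numbers satisfy Jg(n)² - Jg(n-1)·Jg(n+1) = (1/7)·[ -i + (1 + i/2)·2^n·((2-3i)·Ω(n) - (1+2i)·Ω(n+1)) ]. -/
noncomputable def cc (r : ℕ) : ℂ :=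
  if r = 0 then -(2 + Complex.I)/7 else if r = 1 then (3 - 2*Complex.I)/7 else (-1 + 3*Complex.I)/7

lemma jg_formula
    (Jg : ℕ → ℂ)
    (h0 : Jg 0 = 0)
    (h1 : Jg 1 = 1)
    (h2 : Jg 2 = 1 + Complex.I)
    (hrec : ∀ n : ℕ, Jg (n + 3) = Jg (n + 2) + Jg (n + 1) + 2 * Jg n) :
    ∀ n : ℕ, Jg n = (2 + Complex.I)/7 * 2^n + cc (n % 3) := by
  have key : ∀ n : ℕ, (Jg n = (2 + Complex.I)/7 * 2^n + cc (n % 3)) ∧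
      (Jg (n+1) = (2 + Complex.I)/7 * 2^(n+1) + cc ((n+1) % 3)) ∧
      (Jg (n+2) = (2 + Complex.I)/7 * 2^(n+2) + cc ((n+2) % 3)) := by
    intro n
    induction n with
    | zero =>
      refine ⟨?_, ?_, ?_⟩ <;> simp [h0, h1, h2, cc] <;> ring
    | succ k ih =>
      obtain ⟨ih0, ih1, ih2⟩ := ih
      refine ⟨ih1, ih2, ?_⟩
      have h3 : k + 1 + 2 = k + 3 := by ring
      rw [h3, hrec k, ih0, ih1, ih2]
      have hm : (k + 3) % 3 = k % 3 := by omega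
      rw [hm]
      have : k % 3 = 0 ∨ k % 3 = 1 ∨ k % 3 = 2 := by omega
      rcases this with h | h | h <;>
        · have e1 : (k+1) % 3 = (k % 3 + 1) % 3 := by omega
          have e2 : (k+2) % 3 = (k % 3 + 2) % 3 := by omega
          rw [e1, e2, h]
          norm_num [cc, pow_succ]
          ring
  exact fun n => (key n).1

theorem cassini_gaussian_third_order_jacobsthal
    (Jg : ℕ → ℂ)
    (h0 : Jg 0 = 0)
    (h1 : Jg 1 = 1)
    (h2 : Jg 2 = 1 + Complex.I)
    (hrec : ∀ n : ℕ, Jg (n + 3) = Jg (n + 2) + Jg (n + 1) + 2 * Jg n) :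
    ∀ n : ℕ, 1 ≤ n →
      Jg n ^ 2 - Jg (n - 1) * Jg (n + 1) =
        (1 / 7 : ℂ) *
          (-Complex.I + (1 + Complex.I / 2) * 2 ^ n *
            ((2 - 3 * Complex.I) * (Omg n : ℂ) - (1 + 2 * Complex.I) * (Omg (n + 1) : ℂ))) := by
  intro n hn
  obtain ⟨m, rfl⟩ : ∃ m, n = m + 1 := ⟨n - 1, by omega⟩
  have F := jg_formula Jg h0 h1 h2 hrec
  simp only [Nat.add_sub_cancel]
  rw [F m, F (m+1), F (m+2)]
  have h3 : m % 3 = 0 ∨ m % 3 = 1 ∨ m % 3 = 2 := by omega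
  have hI := Complex.I_sq
  rcases h3 with h | h | h <;>
    · have e1 : (m+1) % 3 = (m % 3 + 1) % 3 := by omega
      have e2 : (m+2) % 3 = (m % 3 + 2) % 3 := by omega
      rw [e1, e2, h]
      simp only [Omg, e1, e2, h]
      norm_num [cc, pow_succ]
      ring_nf
      rw [Complex.I_sq]; ring_nf
end

section
/- In the ring of formal power series ℂ[[X]], the generating function of the generalized Gaussian third-order Jacobsthal numbers satisfies (1 - X - X² - 2X³) · (∑_{n≥0} Jg(n)·X^n) = a + (b-a)·X + (c-b-a)·X² + (1/2)·[ (c-b-a) + (3a+b-c)·X - (a-3b+c)·X² ]·i. -/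
open PowerSeries

theorem generating_function_generalized_gaussian_third_order_jacobsthal
    (a b c : ℝ) (Jg : ℕ → ℂ)
    (h0 : Jg 0 = (a : ℂ) + ((c - b - a) / 2 : ℝ) * Complex.I)
    (h1 : Jg 1 = (b : ℂ) + (a : ℝ) * Complex.I)
    (h2 : Jg 2 = (c : ℂ) + (b : ℝ) * Complex.I)
    (hrec : ∀ n : ℕ, Jg (n + 3) = Jg (n + 2) + Jg (n + 1) + 2 * Jg n) :
    (1 - X - X ^ 2 - 2 * X ^ 3 : ℂ⟦X⟧) * PowerSeries.mk Jg =
      C (a : ℂ) + C ((b : ℂ) - a) * X + C ((c : ℂ) - b - a) * X ^ 2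
        + C (1 / 2 : ℂ) *
            (C ((c : ℂ) - b - a) + C ((3 * a + b - c : ℝ) : ℂ) * X
              - C ((a - 3 * b + c : ℝ) : ℂ) * X ^ 2) * C Complex.I := by
  have key : ∀ n : ℕ, coeff (n+3) ((1 - X - X ^ 2 - 2 * X ^ 3 : ℂ⟦X⟧) * PowerSeries.mk Jg)
      = Jg (n+3) - Jg (n+2) - Jg (n+1) - 2 * Jg n := by
    intro n
    have hX : (X : ℂ⟦X⟧) = X ^ 1 := (pow_one _).symm
    rw [hX]
    simp only [sub_mul, one_mul, map_sub, mul_assoc, two_mul, add_mul, map_add,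
      coeff_X_pow_mul']
    norm_num
    rw [show n+3 = (n+1)+2 from by ring, coeff_X_pow_mul]
    simp [coeff_mk]
  ext n
  match n with
  | 0 =>
    simp [coeff_mul, Finset.Nat.sum_antidiagonal_eq_sum_range_succ_mk, Finset.sum_range_succ,
      coeff_one, coeff_X, coeff_X_pow, coeff_C, coeff_mk, h0]
    ring
  | 1 =>
    simp [coeff_mul, Finset.Nat.sum_antidiagonal_eq_sum_range_succ_mk, Finset.sum_range_succ,
      coeff_one, coeff_X, coeff_X_pow, coeff_C, coeff_mk, h0, h1]
    ring
  | 2 =>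
    simp [coeff_mul, Finset.Nat.sum_antidiagonal_eq_sum_range_succ_mk, Finset.sum_range_succ,
      coeff_one, coeff_X, coeff_X_pow, coeff_C, coeff_mk, h0, h1, h2]
    ring
  | (n+3) =>
    rw [key]
    have hR : Jg (n+3) - Jg (n+2) - Jg (n+1) - 2 * Jg n = 0 := by rw [hrec]; ring
    rw [hR]
    have h3 : 3 ≤ n + 3 := by omega
    have hne0 : n + 3 ≠ 0 := by omega
    have hne1 : n + 3 ≠ 1 := by omega
    have hne2 : n + 3 ≠ 2 := by omega
    simp [coeff_mul_C, coeff_C_mul, coeff_mul_X_pow', coeff_X, coeff_X_pow, coeff_C, hne0, hne1, hne2]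
end

section
/- In the ring of formal power series ℂ[[X]], the generating function of the Gaussian third-order Jacobsthal numbers satisfies (1 - X - X² - 2X³) · (∑_{n≥0} Jg(n)·X^n) = X + X²·i. -/
open PowerSeries

theorem generating_function_gaussian_third_order_jacobsthal
    (Jg : ℕ → ℂ)
    (h0 : Jg 0 = 0)
    (h1 : Jg 1 = 1)
    (h2 : Jg 2 = 1 + Complex.I)
    (hrec : ∀ n : ℕ, Jg (n + 3) = Jg (n + 2) + Jg (n + 1) + 2 * Jg n) :
    (1 - X - X ^ 2 - 2 * X ^ 3 : ℂ⟦X⟧) * PowerSeries.mk Jg =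
      X + X ^ 2 * C Complex.I := by
  have h2C : (2 : ℂ⟦X⟧) = C 2 := (map_ofNat C 2).symm
  ext n
  rw [sub_mul, sub_mul, sub_mul, one_mul, mul_assoc, h2C, mul_comm (C (2 : ℂ)),
    mul_assoc, show (X : ℂ⟦X⟧) * mk Jg = X ^ 1 * mk Jg by rw [pow_one]]
  simp only [map_sub, map_add, PowerSeries.coeff_X_pow_mul',
    coeff_mk, map_mul, PowerSeries.coeff_X, PowerSeries.coeff_X_pow, coeff_C_mul]
  match n with
  | 0 => simp [h0]
  | 1 => simp [h0, h1, coeff_mk, PowerSeries.coeff_one, PowerSeries.coeff_X]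
  | 2 => simp [h0, h1, h2, coeff_mk, PowerSeries.coeff_one, PowerSeries.coeff_X]
  | (n+3) =>
    have := hrec n
    simp [coeff_mk, show n+3-2 = n+1 by omega, show n+3-1 = n+2 by omega,
      PowerSeries.coeff_one, PowerSeries.coeff_X, this]
    ring
end

section
/- In the ring of formal power series ℂ[[X]], the generating function of the Gaussian modified third-order Jacobsthal numbers satisfies (1 - X - X² - 2X³) · (∑_{n≥0} Kg(n)·X^n) = 3 - 2X - X² - (1/2)·(1 - 7X + 3X²)·i. -/
open PowerSeries

theorem generating_function_gaussian_modified_third_order_jacobsthal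
    (Kg : ℕ → ℂ)
    (h0 : Kg 0 = 3 - (1 / 2 : ℂ) * Complex.I)
    (h1 : Kg 1 = 1 + 3 * Complex.I)
    (h2 : Kg 2 = 3 + Complex.I)
    (hrec : ∀ n : ℕ, Kg (n + 3) = Kg (n + 2) + Kg (n + 1) + 2 * Kg n) :
    (1 - X - X ^ 2 - 2 * X ^ 3 : ℂ⟦X⟧) * PowerSeries.mk Kg =
      3 - 2 * X - X ^ 2 - C (1 / 2 : ℂ) * (1 - 7 * X + 3 * X ^ 2) * C Complex.I := by
  have e : (1 - X - X ^ 2 - 2 * X ^ 3 : ℂ⟦X⟧) * PowerSeries.mk Kg =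
      PowerSeries.mk Kg - X * PowerSeries.mk Kg - X ^ 2 * PowerSeries.mk Kg -
        C 2 * (X ^ 3 * PowerSeries.mk Kg) := by
    rw [show (2 : ℂ⟦X⟧) = C 2 from (map_ofNat _ _).symm]; ring
  have eR : (3 - 2 * X - X ^ 2 - C (1 / 2 : ℂ) * (1 - 7 * X + 3 * X ^ 2) * C Complex.I : ℂ⟦X⟧)
      = C 3 - C 2 * X - X ^ 2
        - C ((1/2) * Complex.I) * (1 - C 7 * X + C 3 * X ^ 2) := by
    rw [map_mul,
      show ((2:ℂ⟦X⟧)) = C 2 from (map_ofNat _ _).symm,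
      show ((3:ℂ⟦X⟧)) = C 3 from (map_ofNat _ _).symm,
      show ((7:ℂ⟦X⟧)) = C 7 from (map_ofNat _ _).symm]
    ring
  rw [e, eR]
  ext n
  simp only [map_sub, map_add, map_mul, coeff_C_mul, coeff_mk, coeff_C, coeff_one]
  match n with
  | 0 => simp [h0]
  | 1 => simp [coeff_succ_X_mul, coeff_X_pow_mul', coeff_mul_C, coeff_C_mul, ← map_mul, coeff_X, coeff_X_pow, h0, h1]; ring
  | 2 =>
    rw [show (coeff 2) (X * mk Kg) = coeff 1 (mk Kg) from coeff_succ_X_mul 1 _]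
    simp [coeff_X_pow_mul', coeff_mul_C, coeff_C_mul, ← map_mul, coeff_X, coeff_X_pow, h0, h1, h2]
    ring
  | (m+3) =>
    rw [show m+3 = (m+2)+1 from rfl, coeff_succ_X_mul, show (m+2)+1 = (m+1)+2 from rfl,
      coeff_X_pow_mul, show (m+1)+2 = m+3 from rfl, coeff_X_pow_mul]
    simp [coeff_X_pow_mul', coeff_mul_C, coeff_C_mul, ← map_mul, coeff_X, coeff_X_pow, hrec m]
    ring
end

section
/- For every natural number n ≥ 0, the partial sum of the generalized Gaussian third-order Jacobsthal numbers satisfies ∑_{l=0}^{n} Jg(l) = (1/3)·[ Jg(n+2) + 2·Jg(n) + (a-c) + ((c-3b-a)/2)·i ]. -/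
theorem partial_sum_generalized_gaussian_third_order_jacobsthal
    (a b c : ℝ) (Jg : ℕ → ℂ)
    (h0 : Jg 0 = (a : ℂ) + ((c - b - a) / 2 : ℝ) * Complex.I)
    (h1 : Jg 1 = (b : ℂ) + (a : ℝ) * Complex.I)
    (h2 : Jg 2 = (c : ℂ) + (b : ℝ) * Complex.I)
    (hrec : ∀ n : ℕ, Jg (n + 3) = Jg (n + 2) + Jg (n + 1) + 2 * Jg n) :
    ∀ n : ℕ,
      ∑ l ∈ Finset.range (n + 1), Jg l =
        (1 / 3 : ℂ) * (Jg (n + 2) + 2 * Jg n + ((a : ℂ) - c)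
          + ((c - 3 * b - a) / 2 : ℝ) * Complex.I) := by
  intro n
  induction n with
  | zero =>
    simp [Finset.sum_range_one, h0, h2]
    push_cast
    ring
  | succ n ih =>
    rw [Finset.sum_range_succ, ih, show n + 1 + 2 = n + 3 from rfl, hrec n]
    ring
end

section
/- For every natural number n ≥ 0, the partial sum of the Gaussian modified third-order Jacobsthal numbers satisfies ∑_{l=0}^{n} Kg(l) = (1/3)·[ Kg(n+2) + 2·Kg(n) - (3/2)·i ]. -/
theorem partial_sum_gaussian_modified_third_order_jacobsthal
    (Kg : ℕ → ℂ)
    (h0 : Kg 0 = 3 - (1 / 2 : ℂ) * Complex.I)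
    (h1 : Kg 1 = 1 + 3 * Complex.I)
    (h2 : Kg 2 = 3 + Complex.I)
    (hrec : ∀ n : ℕ, Kg (n + 3) = Kg (n + 2) + Kg (n + 1) + 2 * Kg n) :
    ∀ n : ℕ,
      ∑ l ∈ Finset.range (n + 1), Kg l =
        (1 / 3 : ℂ) * (Kg (n + 2) + 2 * Kg n - (3 / 2 : ℂ) * Complex.I) := by
  intro n
  induction n with
  | zero => simp [h0, h2]; ring
  | succ m ih =>
    rw [Finset.sum_range_succ, ih, hrec m]
    ring
end
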